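/- The quartic form f^{μ,0,0} = x³y + y³z + z³t + t³x + μ x²z² over an algebraically closed field k of characteristic zero defines a singular projective surface in P³(k) if and only if μ⁴ = 4⁴/3⁶. -/
import Mathlib


open MvPolynomial

/-- A quartic form in `k[x,y,z,t]` is singular if its four partial derivatives have a common
zero in `k⁴ \ {0}`, i.e. the projective surface `V(f) ⊆ ℙ³(k)` has a singular point. -/
def MvPolynomial.IsSingularForm {k : Type*} [CommRing k] (f : MvPolynomial (Fin 4) k) : Prop :=
  ∃ p : Fin 4 → k, p ≠ 0 ∧ ∀ i : Fin 4, eval p (pderiv i f) = 0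

/-- the quartic form `f^{μ,0,0} = x³y + y³z + z³t + t³x + μx²z²` is singular
iff `μ⁴ = 4⁴/3⁶`. -/
theorem stmt_7 {k : Type*} [Field k] [IsAlgClosed k] [CharZero k] (μ : k) :
    (X 0 ^ 3 * X 1 + X 1 ^ 3 * X 2 + X 2 ^ 3 * X 3 + X 3 ^ 3 * X 0 +
        C μ * X 0 ^ 2 * X 2 ^ 2 : MvPolynomial (Fin 4) k).IsSingularForm ↔
      μ ^ 4 = 4 ^ 4 / 3 ^ 6 := by
  constructor
  · rintro ⟨p, hp0, hp⟩
    have h1 := hp 0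
    have h2 := hp 1
    have h3 := hp 2
    have h4 := hp 3
    simp only [map_add, pderiv_mul, pderiv_X, pderiv_C, Pi.single_apply] at h1 h2 h3 h4
    simp at h1 h2 h3 h4
    set a := p 0 with ha'
    set b := p 1 with hb'
    set c := p 2 with hc'
    set d := p 3 with hd'
    -- h1 : b * (3 * a ^ 2) + d ^ 3 + c ^ 2 * (μ * (2 * a)) = 0
    -- h2 : a ^ 3 + c * (3 * b ^ 2) = 0
    -- h3 : b ^ 3 + d * (3 * c ^ 2) + μ * a ^ 2 * (2 * c) = 0
    -- h4 : c ^ 3 + a * (3 * d ^ 2) = 0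
    have ha : a ≠ 0 := by
      intro h
      apply hp0
      have hc0 : c = 0 := by
        have : c ^ 3 = 0 := by linear_combination h4 - 3 * d ^ 2 * h
        exact pow_eq_zero_iff (by norm_num) |>.mp this
      have hb0 : b = 0 := by
        have : b ^ 3 = 0 := by
          linear_combination h3 - (d * (3 * c) + μ * a ^ 2 * 2) * hc0
        exact pow_eq_zero_iff (by norm_num) |>.mp this
      have hd0 : d = 0 := by
        have : d ^ 3 = 0 := by
          linear_combination h1 - (b * 3 * a + c ^ 2 * μ * 2) * h
        exact pow_eq_zero_iff (by norm_num) |>.mp this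
      funext i
      fin_cases i <;> simp [← ha', ← hb', ← hc', ← hd', h, hb0, hc0, hd0]
    have hb : b ≠ 0 := by
      intro h
      apply ha
      have : a ^ 3 = 0 := by linear_combination h2 - (c * 3 * b) * h
      exact pow_eq_zero_iff (by norm_num) |>.mp this
    have hd2 : 81 * b ^ 6 * d ^ 2 = a ^ 8 := by
      have h5 : a * (81 * b ^ 6 * d ^ 2 - a ^ 8) = 0 := by
        linear_combination 27 * b ^ 6 * h4 -
          ((a ^ 3 + 3 * b ^ 2 * c) ^ 2 - 9 * b ^ 2 * c * (a ^ 3 + 3 * b ^ 2 * c) +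
            27 * b ^ 4 * c ^ 2) * h2
      have := (mul_eq_zero.mp h5).resolve_left ha
      linear_combination this
    have hA : 2187 * b ^ 10 + 9 * a ^ 6 * b ^ 3 * d + 162 * μ * a ^ 5 * b ^ 5 = 0 := by
      have hA0 : a ^ 2 * (2187 * b ^ 10 + 9 * a ^ 6 * b ^ 3 * d + 162 * μ * a ^ 5 * b ^ 5) = 0 := by
        linear_combination 729 * b ^ 9 * h1 - 9 * b ^ 3 * d * hd2 -
          162 * μ * a * b ^ 5 * (3 * b ^ 2 * c - a ^ 3) * h2
      exact (mul_eq_zero.mp hA0).resolve_left (pow_ne_zero 2 ha)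
    have hB : 27 * b ^ 10 + 9 * a ^ 6 * b ^ 3 * d - 18 * μ * a ^ 5 * b ^ 5 = 0 := by
      linear_combination 27 * b ^ 7 * h3 - 9 * b ^ 3 * d * (3 * b ^ 2 * c - a ^ 3) * h2 -
        18 * μ * a ^ 2 * b ^ 5 * h2
    have hb5 : 12 * b ^ 5 = -(μ * a ^ 5) := by
      have h6 : b ^ 5 * (2160 * b ^ 5 + 180 * μ * a ^ 5) = 0 := by
        linear_combination hA - hB
      have h7 := (mul_eq_zero.mp h6).resolve_left (pow_ne_zero 5 hb)
      linear_combination h7 / 180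
    have hsq : (9 * a ^ 6 * b ^ 3 * d) ^ 2 = (27 * b ^ 10 - 18 * μ * a ^ 5 * b ^ 5) ^ 2 := by
      linear_combination (9 * a ^ 6 * b ^ 3 * d - 27 * b ^ 10 + 18 * μ * a ^ 5 * b ^ 5) * hB
    have h20 : a ^ 20 = (27 * b ^ 10 - 18 * μ * a ^ 5 * b ^ 5) ^ 2 := by
      linear_combination hsq - a ^ 12 * hd2
    have key : (729 * μ ^ 4 - 256) * a ^ 20 = 0 := by
      linear_combination (-256 : k) * h20 +
        (-15552 * b ^ 15 + 22032 * μ * a ^ 5 * b ^ 10 - 8748 * μ ^ 2 * a ^ 10 * b ^ 5 +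
          729 * μ ^ 3 * a ^ 15) * hb5
    have hfin := (mul_eq_zero.mp key).resolve_right (pow_ne_zero 20 ha)
    have : μ ^ 4 = 256 / 729 := by
      field_simp
      linear_combination hfin
    rw [this]; norm_num
  · intro hμ
    have hμ4 : 729 * μ ^ 4 = 256 := by rw [hμ]; norm_num
    obtain ⟨y, hy⟩ := IsAlgClosed.exists_pow_nat_eq (-μ / 12 : k) (n := 5) (by norm_num)
    have hy' : 12 * y ^ 5 = -μ := by rw [hy]; ring
    have hy0 : y ≠ 0 := by
      intro h
      rw [h] at hy'
      have : μ = 0 := by linear_combination hy'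
      rw [this] at hμ4
      norm_num at hμ4
    set s : k := -(27 / 16) * μ ^ 2 with hsdef
    have hs : 16 * s = -27 * μ ^ 2 := by rw [hsdef]; ring
    have hs2 : s ^ 2 = 1 := by
      rw [hsdef]
      linear_combination (1 / 256 : k) * hμ4
    refine ⟨![9 * y ^ 3, 9 * y ^ 4, -3 * y, s], ?_, ?_⟩
    · intro h
      have h0 := congrFun h 0
      simp at h0
      exact hy0 h0
    · intro i
      fin_cases i <;>
        simp only [map_add, pderiv_mul, pderiv_X, pderiv_C, Pi.single_apply] <;>
        simp [Matrix.cons_val_zero, Matrix.cons_val_one, Matrix.head_cons] <;>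
        ring_nf
      · -- E1 : 2187 y^10 + s^3 + 162 μ y^5 = 0
        linear_combination (2187 / 144 * (12 * y ^ 5 - μ) + 162 * μ / 12) * hy' + s * hs2 +
          (1 / 16 : k) * hs
      · -- E3
        linear_combination (729 / 144 * (12 * y ^ 5 - μ) * y ^ 2 - 486 / 12 * μ * y ^ 2) * hy' +
          27 / 16 * y ^ 2 * hs
      · -- E4
        linear_combination 27 * y ^ 3 * hs2
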